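/- Let p ∈ [0,1] and C > 0, and let Φ : ℝ → ℝ be twice continuously differentiable with |Φ'(x)| ≤ C and |Φ''(x)| ≤ C for all x ∈ ℝ, and |Φ(x) − Φ(y)| ≤ C |x−y|^p for all x, y ∈ ℝ. Then there exists a constant C' > 0 such that for all a ∈ ℝ and all x, y > 0, F(a,x,y) := |∫_0^y ∫_0^x Φ''(a+u+v) du dv| ≤ C' (x^p ∧ x)(y^p ∧ y). -/

import Mathlib

/-- Lemma 6.1 of the paper: if `Φ` is `C²` with `|Φ'| ≤ C`, `|Φ''| ≤ C`
and `|Φ(x) − Φ(y)| ≤ C |x−y|^p` for some `p ∈ [0,1]`, then there is `C' > 0` such that for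
all `a ∈ ℝ` and `x, y > 0`,
`F(a,x,y) = |∫_0^y ∫_0^x Φ''(a+u+v) du dv| ≤ C' (x^p ∧ x)(y^p ∧ y)`. -/
theorem statement7
    {p C : ℝ} (hp0 : 0 ≤ p) (hp1 : p ≤ 1) (hC : 0 < C)
    (Φ : ℝ → ℝ) (hΦ : ContDiff ℝ 2 Φ)
    (hd1 : ∀ x : ℝ, |deriv Φ x| ≤ C)
    (hd2 : ∀ x : ℝ, |deriv (deriv Φ) x| ≤ C)
    (hH : ∀ x y : ℝ, |Φ x - Φ y| ≤ C * |x - y| ^ p) :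
    ∃ C' > (0 : ℝ), ∀ a x y : ℝ, 0 < x → 0 < y →
      |∫ v in (0 : ℝ)..y, ∫ u in (0 : ℝ)..x, deriv (deriv Φ) (a + u + v)| ≤
        C' * min (x ^ p) x * min (y ^ p) y := by
  have hΦd : Differentiable ℝ Φ := hΦ.differentiable (by norm_num)
  have h1 : ContDiff ℝ 1 (deriv Φ) :=
    (contDiff_succ_iff_deriv.mp (show ContDiff ℝ (1 + 1) Φ from hΦ)).2.2
  have hfd : Differentiable ℝ (deriv Φ) := h1.differentiable (by norm_num)
  have hfc : Continuous (deriv Φ) := hfd.continuous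
  have hf'c : Continuous (deriv (deriv Φ)) := h1.continuous_deriv le_rfl
  have ftc1 : ∀ c d : ℝ, (∫ t in c..d, deriv Φ t) = Φ d - Φ c := fun c d =>
    intervalIntegral.integral_deriv_eq_sub (fun t _ => hΦd t) (hfc.intervalIntegrable _ _)
  have ftc2 : ∀ c d : ℝ, (∫ t in c..d, deriv (deriv Φ) t) = deriv Φ d - deriv Φ c := fun c d =>
    intervalIntegral.integral_deriv_eq_sub (fun t _ => hfd t) (hf'c.intervalIntegrable _ _)
  -- increments of Φ are bounded by C * s
  have incr : ∀ c s : ℝ, 0 ≤ s → |Φ (c + s) - Φ c| ≤ C * s := by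
    intro c s hs
    rw [← ftc1 c (c + s)]
    have := intervalIntegral.norm_integral_le_of_norm_le_const
      (a := c) (b := c + s) (C := C) (f := deriv Φ)
      (fun t _ => by simpa [Real.norm_eq_abs] using hd1 t)
    simpa [Real.norm_eq_abs, abs_of_nonneg hs] using this
  refine ⟨2 * C, by linarith, fun a x y hx hy => ?_⟩
  -- compute the double integral
  have inner : ∀ v : ℝ, (∫ u in (0:ℝ)..x, deriv (deriv Φ) (a + u + v))
      = deriv Φ (a + x + v) - deriv Φ (a + v) := by
    intro v
    have e1 : (∫ u in (0:ℝ)..x, deriv (deriv Φ) (a + u + v))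
        = ∫ u in (0:ℝ)..x, deriv (deriv Φ) ((a + v) + u) := by
      apply intervalIntegral.integral_congr
      intro u _; ring_nf
    rw [e1, intervalIntegral.integral_comp_add_left (deriv (deriv Φ)) (a + v), add_zero,
      ftc2]
    ring_nf
  have hFval : (∫ v in (0:ℝ)..y, ∫ u in (0:ℝ)..x, deriv (deriv Φ) (a + u + v))
      = Φ (a + x + y) - Φ (a + x) - (Φ (a + y) - Φ a) := by
    have e1 : (∫ v in (0:ℝ)..y, ∫ u in (0:ℝ)..x, deriv (deriv Φ) (a + u + v))
        = ∫ v in (0:ℝ)..y, (deriv Φ ((a + x) + v) - deriv Φ (a + v)) := by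
      apply intervalIntegral.integral_congr
      intro v _; simpa using inner v
    have c1 : Continuous fun v : ℝ => deriv Φ (a + x + v) := hfc.comp (by continuity)
    have c2 : Continuous fun v : ℝ => deriv Φ (a + v) := hfc.comp (by continuity)
    rw [e1, intervalIntegral.integral_sub (c1.intervalIntegrable 0 y)
      (c2.intervalIntegrable 0 y),
      intervalIntegral.integral_comp_add_left (deriv Φ) (a + x),
      intervalIntegral.integral_comp_add_left (deriv Φ) a, add_zero, add_zero,
      ftc1, ftc1]
  set E : ℝ := Φ (a + x + y) - Φ (a + x) - (Φ (a + y) - Φ a) with hE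
  have habs_x : |x| = x := abs_of_pos hx
  have habs_y : |y| = y := abs_of_pos hy
  -- bound by 2 C x^p
  have bXp : |E| ≤ 2 * C * x ^ p := by
    have h1' := hH (a + x + y) (a + y)
    have h2' := hH (a + x) a
    have e1 : a + x + y - (a + y) = x := by ring
    have e2 : a + x - a = x := by ring
    rw [e1, habs_x] at h1'
    rw [e2, habs_x] at h2'
    have : |E| ≤ |Φ (a + x + y) - Φ (a + y)| + |Φ (a + x) - Φ a| := by
      rw [hE]; rw [show Φ (a + x + y) - Φ (a + x) - (Φ (a + y) - Φ a)
        = (Φ (a + x + y) - Φ (a + y)) - (Φ (a + x) - Φ a) by ring]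
      exact abs_sub _ _
    linarith
  -- bound by 2 C y^p
  have bYp : |E| ≤ 2 * C * y ^ p := by
    have h1' := hH (a + x + y) (a + x)
    have h2' := hH (a + y) a
    have e1 : a + x + y - (a + x) = y := by ring
    have e2 : a + y - a = y := by ring
    rw [e1, habs_y] at h1'
    rw [e2, habs_y] at h2'
    have : |E| ≤ |Φ (a + x + y) - Φ (a + x)| + |Φ (a + y) - Φ a| := abs_sub _ _
    linarith
  -- bound by 2 C x
  have bX : |E| ≤ 2 * C * x := by
    have h1' := incr (a + y) x hx.le
    have h2' := incr a x hx.le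
    have e1 : a + y + x = a + x + y := by ring
    rw [e1] at h1'
    have : |E| ≤ |Φ (a + x + y) - Φ (a + y)| + |Φ (a + x) - Φ a| := by
      rw [hE]; rw [show Φ (a + x + y) - Φ (a + x) - (Φ (a + y) - Φ a)
        = (Φ (a + x + y) - Φ (a + y)) - (Φ (a + x) - Φ a) by ring]
      exact abs_sub _ _
    linarith
  -- bound by 2 C y
  have bY : |E| ≤ 2 * C * y := by
    have h1' := incr (a + x) y hy.le
    have h2' := incr a y hy.le
    have : |E| ≤ |Φ (a + x + y) - Φ (a + x)| + |Φ (a + y) - Φ a| := abs_sub _ _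
    linarith
  -- bound by C x y
  have bXY : |E| ≤ C * x * y := by
    rw [← hFval]
    have hin : ∀ v ∈ Set.uIoc (0:ℝ) y,
        ‖∫ u in (0:ℝ)..x, deriv (deriv Φ) (a + u + v)‖ ≤ C * x := by
      intro v _
      have := intervalIntegral.norm_integral_le_of_norm_le_const
        (a := (0:ℝ)) (b := x) (C := C) (f := fun u => deriv (deriv Φ) (a + u + v))
        (fun t _ => by simpa [Real.norm_eq_abs] using hd2 (a + t + v))
      simpa [Real.norm_eq_abs, habs_x] using this
    have := intervalIntegral.norm_integral_le_of_norm_le_const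
      (a := (0:ℝ)) (b := y) (C := C * x)
      (f := fun v => ∫ u in (0:ℝ)..x, deriv (deriv Φ) (a + u + v)) hin
    calc |∫ v in (0:ℝ)..y, ∫ u in (0:ℝ)..x, deriv (deriv Φ) (a + u + v)|
        ≤ C * x * |y - 0| := by simpa [Real.norm_eq_abs] using this
      _ = C * x * y := by rw [sub_zero, habs_y]
  rw [hFval]
  by_cases hx1 : x ≤ 1
  · by_cases hy1 : y ≤ 1
    · -- both small : use C x y
      have hxm : min (x ^ p) x = x := min_eq_right (by
        calc x = x ^ (1:ℝ) := (Real.rpow_one x).symm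
          _ ≤ x ^ p := Real.rpow_le_rpow_of_exponent_ge hx hx1 hp1)
      have hym : min (y ^ p) y = y := min_eq_right (by
        calc y = y ^ (1:ℝ) := (Real.rpow_one y).symm
          _ ≤ y ^ p := Real.rpow_le_rpow_of_exponent_ge hy hy1 hp1)
      rw [hxm, hym]
      nlinarith
    · -- y large
      push_neg at hy1
      have hym : min (y ^ p) y = y ^ p := min_eq_left (by
        calc y ^ p ≤ y ^ (1:ℝ) := Real.rpow_le_rpow_of_exponent_le hy1.le hp1
          _ = y := Real.rpow_one y)
      have hyp1 : (1:ℝ) ≤ y ^ p := by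
        calc (1:ℝ) = 1 ^ p := (Real.one_rpow p).symm
          _ ≤ y ^ p := Real.rpow_le_rpow zero_le_one hy1.le hp0
      rw [hym]
      have hmin : |E| ≤ 2 * C * min (x ^ p) x := by
        rcases min_cases (x ^ p) x with ⟨h, _⟩ | ⟨h, _⟩
        · rw [h]; exact bXp
        · rw [h]; exact bX
      have hminnn : 0 ≤ min (x ^ p) x :=
        le_min (Real.rpow_nonneg hx.le p) hx.le
      calc |E| ≤ 2 * C * min (x ^ p) x := hmin
        _ = 2 * C * min (x ^ p) x * 1 := by ring
        _ ≤ 2 * C * min (x ^ p) x * y ^ p :=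
            mul_le_mul_of_nonneg_left hyp1 (mul_nonneg (by linarith) hminnn)
  · -- x large
    push_neg at hx1
    have hxm : min (x ^ p) x = x ^ p := min_eq_left (by
      calc x ^ p ≤ x ^ (1:ℝ) := Real.rpow_le_rpow_of_exponent_le hx1.le hp1
        _ = x := Real.rpow_one x)
    have hxp1 : (1:ℝ) ≤ x ^ p := by
      calc (1:ℝ) = 1 ^ p := (Real.one_rpow p).symm
        _ ≤ x ^ p := Real.rpow_le_rpow zero_le_one hx1.le hp0
    rw [hxm]
    have hmin : |E| ≤ 2 * C * min (y ^ p) y := by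
      rcases min_cases (y ^ p) y with ⟨h, _⟩ | ⟨h, _⟩
      · rw [h]; exact bYp
      · rw [h]; exact bY
    have hminnn : 0 ≤ min (y ^ p) y :=
      le_min (Real.rpow_nonneg hy.le p) hy.le
    calc |E| ≤ 2 * C * min (y ^ p) y := hmin
      _ = 2 * C * 1 * min (y ^ p) y := by ring
      _ ≤ 2 * C * x ^ p * min (y ^ p) y := by
          apply mul_le_mul_of_nonneg_right _ hminnn
          nlinarith
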